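/- If lim inf_{n→∞} λ_{n+1}/λ_n = 1, then c₀ ⊆ c₀^λ(F̂): every null sequence x satisfies F̄_n(x) → 0. Moreover this inclusion is strict, witnessed by x_n = f_{n+1}² which lies in c₀^λ(F̂) but is not a null sequence. -/

import Mathlib

open Filter Finset

noncomputable def fibR : ℕ → ℝ
  | 0 => 1
  | 1 => 1
  | (n + 2) => fibR (n + 1) + fibR n

noncomputable def Fhat (x : ℕ → ℝ) (n : ℕ) : ℝ :=
  fibR n / fibR (n + 1) * x n - fibR (n + 1) / fibR n * (if n = 0 then 0 else x (n - 1))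

noncomputable def Fbar (Λ : ℕ → ℝ) (x : ℕ → ℝ) (n : ℕ) : ℝ :=
  (1 / Λ n) * ∑ k ∈ Finset.range (n + 1),
    (Λ k - if k = 0 then 0 else Λ (k - 1)) *
      (fibR k / fibR (k + 1) * x k -
        fibR (k + 1) / fibR k * (if k = 0 then 0 else x (k - 1)))

lemma fibR_pos : ∀ n, 0 < fibR n
  | 0 => by norm_num [fibR]
  | 1 => by norm_num [fibR]
  | (n + 2) => by
      show (0:ℝ) < fibR (n+1) + fibR n
      exact add_pos (fibR_pos (n+1)) (fibR_pos n)

lemma fibR_le_succ : ∀ n, fibR n ≤ fibR (n + 1)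
  | 0 => by norm_num [fibR]
  | (n + 1) => by
      show fibR (n+1) ≤ fibR (n+1) + fibR n
      linarith [fibR_pos n]

lemma fibR_succ_le : ∀ n, fibR (n + 1) ≤ 2 * fibR n
  | 0 => by norm_num [fibR]
  | (n + 1) => by
      show fibR (n+1) + fibR n ≤ 2 * fibR (n+1)
      linarith [fibR_le_succ n]

lemma weighted_mean_tendsto_zero (Λ w a : ℕ → ℝ) (hw : ∀ k, 0 ≤ w k)
    (hW : ∀ n, ∑ k ∈ range (n + 1), w k = Λ n)
    (hΛpos : ∀ n, 0 < Λ n) (hΛ : Tendsto Λ atTop atTop)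
    (ha : Tendsto a atTop (nhds 0)) :
    Tendsto (fun n => (1 / Λ n) * ∑ k ∈ range (n + 1), w k * a k) atTop (nhds 0) := by
  rw [NormedAddCommGroup.tendsto_nhds_zero]
  intro ε hε
  obtain ⟨N, hN⟩ := (Metric.tendsto_atTop.mp ha (ε / 3) (by linarith)).imp
    (fun N h n hn => by simpa [Real.dist_eq] using h n hn)
  set C : ℝ := ∑ k ∈ range N, |w k * a k| with hC
  have hC0 : 0 ≤ C := Finset.sum_nonneg fun k _ => abs_nonneg _
  have hM : (0:ℝ) < 3 * (C + 1) / ε := by positivity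
  filter_upwards [eventually_ge_atTop N, hΛ.eventually_ge_atTop (3 * (C + 1) / ε)]
    with n hn hMn
  have hΛn : 0 < Λ n := hΛpos n
  have hsplit : ∑ k ∈ range (n + 1), w k * a k
      = (∑ k ∈ range N, w k * a k) + ∑ k ∈ Finset.Ico N (n + 1), w k * a k := by
    rw [range_eq_Ico, range_eq_Ico]
    exact (Finset.sum_Ico_consecutive (fun k => w k * a k) (Nat.zero_le _) (by omega : N ≤ n + 1)).symm
  have hbound : |∑ k ∈ range (n + 1), w k * a k| ≤ C + ε / 3 * Λ n := by
    rw [hsplit]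
    refine (abs_add_le _ _).trans ?_
    have h1 : |∑ k ∈ range N, w k * a k| ≤ C :=
      Finset.abs_sum_le_sum_abs _ _
    have h2 : |∑ k ∈ Finset.Ico N (n + 1), w k * a k| ≤ ε / 3 * Λ n := by
      refine (Finset.abs_sum_le_sum_abs _ _).trans ?_
      have : ∀ k ∈ Finset.Ico N (n + 1), |w k * a k| ≤ w k * (ε / 3) := by
        intro k hk
        rw [abs_mul, abs_of_nonneg (hw k)]
        exact mul_le_mul_of_nonneg_left (le_of_lt (hN k (Finset.mem_Ico.mp hk).1)) (hw k)
      refine (Finset.sum_le_sum this).trans ?_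
      rw [← Finset.sum_mul]
      have hsub : ∑ k ∈ Finset.Ico N (n + 1), w k ≤ Λ n := by
        rw [← hW n, range_eq_Ico]
        exact Finset.sum_le_sum_of_subset_of_nonneg
          (Finset.Ico_subset_Ico (Nat.zero_le _) le_rfl) (fun k _ _ => hw k)
      calc (∑ k ∈ Finset.Ico N (n + 1), w k) * (ε / 3) ≤ Λ n * (ε / 3) :=
            mul_le_mul_of_nonneg_right hsub (by linarith)
        _ = ε / 3 * Λ n := by ring
    linarith
  have hCdiv : C / Λ n < ε / 3 := by
    have h1 : C / Λ n ≤ C / (3 * (C + 1) / ε) :=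
      div_le_div_of_nonneg_left hC0 hM hMn
    have h2 : C / (3 * (C + 1) / ε) < ε / 3 := by
      rw [div_lt_iff₀ hM]
      have : ε / 3 * (3 * (C + 1) / ε) = C + 1 := by field_simp
      rw [this]; linarith
    linarith
  have : ‖(1 / Λ n) * ∑ k ∈ range (n + 1), w k * a k‖
      = |∑ k ∈ range (n + 1), w k * a k| / Λ n := by
    rw [norm_mul, Real.norm_eq_abs, Real.norm_eq_abs, abs_of_pos (by positivity : (0:ℝ) < 1 / Λ n)]
    rw [one_div, inv_mul_eq_div]
  rw [this]
  calc |∑ k ∈ range (n + 1), w k * a k| / Λ n ≤ (C + ε / 3 * Λ n) / Λ n := by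
        gcongr
    _ = C / Λ n + ε / 3 := by
        rw [add_div, mul_div_assoc, div_self (ne_of_gt hΛn), mul_one]
    _ < ε / 3 + ε / 3 := by linarith
    _ < ε := by linarith

theorem c0_strict_subset_c0lambdaF (Λ : ℕ → ℝ) (hmono : StrictMono Λ) (hpos : ∀ k, 0 < Λ k)
    (hlim : Tendsto Λ atTop atTop)
    (hliminf : Filter.liminf (fun n => Λ (n + 1) / Λ n) atTop = 1) :
    (∀ x : ℕ → ℝ, Tendsto x atTop (nhds 0) → Tendsto (Fbar Λ x) atTop (nhds 0)) ∧
    (∀ x : ℕ → ℝ, (∀ n, x n = fibR (n + 1) ^ 2) →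
      Tendsto (Fbar Λ x) atTop (nhds 0) ∧ ¬ Tendsto x atTop (nhds 0)) := by
  set w : ℕ → ℝ := fun k => Λ k - if k = 0 then 0 else Λ (k - 1) with hwdef
  have hw : ∀ k, 0 ≤ w k := by
    intro k
    cases k with
    | zero => simp [hwdef]; exact (hpos 0).le
    | succ m => simp [hwdef]; exact (hmono (Nat.lt_succ_self m)).le
  have hW : ∀ n, ∑ k ∈ range (n + 1), w k = Λ n := by
    intro n
    induction n with
    | zero => simp [hwdef]
    | succ m ih =>
      rw [Finset.sum_range_succ, ih]
      simp [hwdef]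
  constructor
  · intro x hx
    have hx' : Tendsto (fun n => if n = 0 then (0:ℝ) else x (n - 1)) atTop (nhds 0) := by
      have h1 : Tendsto (fun n : ℕ => x (n - 1)) atTop (nhds 0) :=
        hx.comp (tendsto_sub_atTop_nat 1)
      refine h1.congr' ?_
      filter_upwards [eventually_ge_atTop 1] with n hn
      simp [Nat.one_le_iff_ne_zero.mp hn]
    have hFhat : Tendsto (Fhat x) atTop (nhds 0) := by
      have hbd : ∀ n, ‖Fhat x n‖ ≤ |x n| + 2 * |if n = 0 then (0:ℝ) else x (n - 1)| := by
        intro n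
        have hp1 := fibR_pos n
        have hp2 := fibR_pos (n + 1)
        have hr1 : fibR n / fibR (n + 1) ≤ 1 :=
          (div_le_one hp2).mpr (fibR_le_succ n)
        have hr2 : fibR (n + 1) / fibR n ≤ 2 :=
          (div_le_iff₀ hp1).mpr (fibR_succ_le n)
        have hr1' : 0 ≤ fibR n / fibR (n + 1) := by positivity
        have hr2' : 0 ≤ fibR (n + 1) / fibR n := by positivity
        rw [Real.norm_eq_abs, Fhat]
        refine (abs_sub _ _).trans ?_
        rw [abs_mul, abs_mul, abs_of_nonneg hr1', abs_of_nonneg hr2']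
        have := mul_le_mul_of_nonneg_right hr1 (abs_nonneg (x n))
        have := mul_le_mul_of_nonneg_right hr2 (abs_nonneg (if n = 0 then (0:ℝ) else x (n - 1)))
        nlinarith [abs_nonneg (x n), abs_nonneg (if n = 0 then (0:ℝ) else x (n - 1))]
      have hg : Tendsto (fun n => |x n| + 2 * |if n = 0 then (0:ℝ) else x (n - 1)|)
          atTop (nhds 0) := by
        have := (hx.abs.add ((hx'.abs).const_mul 2))
        simpa using this
      exact squeeze_zero_norm hbd hg
    have := weighted_mean_tendsto_zero Λ w (Fhat x) hw hW hpos hlim hFhat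
    refine this.congr fun n => ?_
    simp only [Fbar, Fhat, hwdef]
  · intro x hxdef
    constructor
    · have hsum : ∀ n, (∑ k ∈ Finset.range (n + 1),
          (Λ k - if k = 0 then 0 else Λ (k - 1)) *
            (fibR k / fibR (k + 1) * x k -
              fibR (k + 1) / fibR k * (if k = 0 then 0 else x (k - 1)))) = Λ 0 := by
        intro n
        rw [Finset.sum_eq_single 0]
        · simp [hxdef 0, fibR]
        · intro k hk hk0
          obtain ⟨m, rfl⟩ := Nat.exists_eq_succ_of_ne_zero hk0
          have h1 := fibR_pos (m + 1)
          have h2 := fibR_pos (m + 2)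
          have : fibR (m + 1) / fibR (m + 2) * x (m + 1) -
              fibR (m + 2) / fibR (m + 1) * (if m + 1 = 0 then 0 else x (m + 1 - 1)) = 0 := by
            simp only [Nat.succ_ne_zero, if_false, Nat.add_sub_cancel, hxdef]
            field_simp
            ring
          rw [this, mul_zero]
        · intro h
          exact absurd (Finset.mem_range.mpr (Nat.succ_pos n)) h
      have : Fbar Λ x = fun n => Λ 0 / Λ n := by
        funext n
        rw [Fbar, hsum n]
        ring
      rw [this]
      exact Tendsto.div_atTop tendsto_const_nhds hlim
    · intro hcon
      have hge : ∀ n, (1:ℝ) ≤ x n := by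
        intro n
        rw [hxdef n]
        have h1 : (1:ℝ) ≤ fibR (n + 1) := by
          have := fibR_le_succ n
          have : ∀ m, (1:ℝ) ≤ fibR m := by
            intro m
            induction m with
            | zero => norm_num [fibR]
            | succ k ih => exact ih.trans (fibR_le_succ k)
          exact this (n + 1)
        nlinarith
      have := (Metric.tendsto_atTop.mp hcon 1 one_pos)
      obtain ⟨N, hN⟩ := this
      have := hN N le_rfl
      rw [Real.dist_eq, sub_zero] at this
      have := hge N
      have habs : (1:ℝ) ≤ |x N| := this.trans (le_abs_self _)
      linarith
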